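/- Let q ≥ 11 be a real number and let α be a real number in the closed interval [4/(3q-2), 1/2]. Then (1/α) · q^{1+α} < q^2 - 2. -/

import Mathlib

open Real

private lemma log11_le : Real.log 11 ≤ 12/5 := by
  rw [Real.log_le_iff_le_exp (by norm_num)]
  have h5 : (11:ℝ)^5 < (Real.exp (12/5))^5 := by
    have e1 : (Real.exp (12/5))^5 = Real.exp 12 := by
      rw [← Real.exp_nat_mul]; norm_num
    have e2 : Real.exp 12 = (Real.exp 1)^12 := by
      rw [← Real.exp_nat_mul]; norm_num
    have h3 : (2.7182818283:ℝ)^12 ≤ (Real.exp 1)^12 :=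
      pow_le_pow_left₀ (by norm_num) Real.exp_one_gt_d9.le 12
    have : (161051:ℝ) < (2.7182818283:ℝ)^12 := by norm_num
    rw [e1, e2]; nlinarith
  exact (lt_of_pow_lt_pow_left₀ 5 (Real.exp_pos _).le h5).le

private lemma exp_cubic_bound {x : ℝ} (hx0 : 0 ≤ x) (hx1 : x ≤ 1) :
    Real.exp x ≤ 1 + x + x^2/2 + (2/9)*x^3 := by
  have h := Real.exp_bound' hx0 hx1 (n := 3) (by norm_num)
  simp [Finset.sum_range_succ, Nat.factorial] at h
  nlinarith [h]

/-- Left endpoint inequality: `q^(1 + 4/(3q-2)) < (q²-2) · 4/(3q-2)` for `q ≥ 11`. -/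
private lemma endpoint_left {q : ℝ} (hq : 11 ≤ q) :
    Real.exp (4 / (3*q - 2) * Real.log q) < 4*(q^2 - 2) / (q*(3*q - 2)) := by
  have hq0 : (0:ℝ) < q := by linarith
  have h3q : (0:ℝ) < 3*q - 2 := by linarith
  have hlogq : Real.log q ≤ 12/5 + (q - 11)/11 := by
    have h1 : Real.log (q/11) = Real.log q - Real.log 11 :=
      Real.log_div (by linarith) (by norm_num)
    have h2 : Real.log (q/11) ≤ q/11 - 1 :=
      Real.log_le_sub_one_of_pos (by positivity)
    have := log11_le
    linarith
  have hlogq0 : 0 ≤ Real.log q := Real.log_nonneg (by linarith)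
  set x := 4 / (3*q - 2) * Real.log q with hxdef
  set X := 4 / (3*q - 2) * (12/5 + (q - 11)/11) with hXdef
  have hxX : x ≤ X := by
    apply mul_le_mul_of_nonneg_left hlogq (by positivity)
  have hX1 : X ≤ 1 := by
    rw [hXdef, div_mul_eq_mul_div, div_le_one h3q]
    linarith
  have hx0 : 0 ≤ x := by positivity
  have hbound := exp_cubic_bound hx0 (hxX.trans hX1)
  have hmono : 1 + x + x^2/2 + (2/9)*x^3 ≤ 1 + X + X^2/2 + (2/9)*X^3 := by
    have h2 : x^2 ≤ X^2 := pow_le_pow_left₀ hx0 hxX 2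
    have h3 : x^3 ≤ X^3 := pow_le_pow_left₀ hx0 hxX 3
    linarith
  have hd : (0:ℝ) < 165*q - 110 := by linarith
  have hXeq : X = (20*q + 308) / (165*q - 110) := by
    have h1 : (3*q - 2) ≠ 0 := ne_of_gt h3q
    have h2 : (165*q - 110) ≠ 0 := ne_of_gt hd
    rw [hXdef]
    rw [div_mul_eq_mul_div, div_eq_div_iff h1 h2]
    ring
  have hkey : 1 + X + X^2/2 + (2/9)*X^3 < 4*(q^2 - 2) / (q*(3*q - 2)) := by
    have hnum : 0 < 49577250*q^5 - 450881000*q^4 - 411655200*q^3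
        + 1124382336*q^2 - 730325024*q + 191664000 := by
      have ht : (0:ℝ) ≤ q - 11 := by linarith
      nlinarith [pow_nonneg ht 5, pow_nonneg ht 4, pow_nonneg ht 3, sq_nonneg (q-11), ht]
    have hiden : 4*(q^2 - 2) / (q*(3*q - 2)) - (1 + X + X^2/2 + (2/9)*X^3)
        = (49577250*q^5 - 450881000*q^4 - 411655200*q^3
            + 1124382336*q^2 - 730325024*q + 191664000)
          / (18 * (q*(3*q - 2)) * (165*q - 110)^3) := by
      rw [hXeq]
      have hq1 : q ≠ 0 := ne_of_gt hq0
      have h1' : q*3 - 2 ≠ 0 := by intro h; linarith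
      have h2' : q*165 - 110 ≠ 0 := by intro h; linarith
      field_simp
      ring
    have hpos : 0 < (49577250*q^5 - 450881000*q^4 - 411655200*q^3
            + 1124382336*q^2 - 730325024*q + 191664000)
          / (18 * (q*(3*q - 2)) * (165*q - 110)^3) := by
      apply div_pos hnum
      positivity
    linarith [hiden ▸ hpos]
  calc Real.exp x ≤ 1 + x + x^2/2 + (2/9)*x^3 := hbound
    _ ≤ 1 + X + X^2/2 + (2/9)*X^3 := hmono
    _ < 4*(q^2 - 2) / (q*(3*q - 2)) := hkey

/-- Key analytic inequality: for real `q ≥ 11` and `α ∈ [4/(3q-2), 1/2]`,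
`(1/α)·q^{1+α} < q² - 2`. -/
theorem stmt6 (q α : ℝ) (hq : 11 ≤ q)
    (hα1 : 4 / (3 * q - 2) ≤ α) (hα2 : α ≤ 1 / 2) :
    (1 / α) * q ^ (1 + α) < q ^ 2 - 2 := by
  have hq0 : (0:ℝ) < q := by linarith
  have h3q : (0:ℝ) < 3*q - 2 := by linarith
  set A : ℝ := 4 / (3 * q - 2) with hAdef
  set B : ℝ := 1/2 with hBdef
  have hA0 : 0 < A := by positivity
  have hα0 : 0 < α := lt_of_lt_of_le hA0 hα1
  have hAB : A < B := by
    rw [hAdef, hBdef, div_lt_div_iff₀ h3q (by norm_num)]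
    linarith
  have hrw : ∀ y : ℝ, q ^ (1 + y) = q * Real.exp (y * Real.log q) := by
    intro y
    rw [Real.rpow_def_of_pos hq0]
    rw [show Real.log q * (1 + y) = Real.log q + y * Real.log q by ring]
    rw [Real.exp_add, Real.exp_log hq0]
  -- endpoint inequalities
  have key1 : q ^ (1 + A) < (q^2 - 2) * A := by
    rw [hrw]
    have h := endpoint_left hq
    have : q * Real.exp (A * Real.log q) < q * (4*(q^2 - 2) / (q*(3*q - 2))) :=
      mul_lt_mul_of_pos_left h hq0
    calc q * Real.exp (A * Real.log q) < q * (4*(q^2 - 2) / (q*(3*q - 2))) := this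
      _ = (q^2 - 2) * A := by rw [hAdef]; field_simp
  have key2 : q ^ (1 + B) < (q^2 - 2) * B := by
    have hs : Real.sqrt q ^ 2 = q := Real.sq_sqrt hq0.le
    have hs3 : (3:ℝ) ≤ Real.sqrt q := by
      nlinarith [Real.sqrt_nonneg q, hs]
    have hB : q ^ (1 + B) = q * Real.sqrt q := by
      rw [hBdef, Real.rpow_add hq0, Real.rpow_one, ← Real.sqrt_eq_rpow]
    rw [hB, hBdef]
    nlinarith [hs, hs3]
  -- convex combination
  have hBA : 0 < B - A := by linarith
  set s : ℝ := (B - α) / (B - A) with hsdef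
  set t : ℝ := (α - A) / (B - A) with htdef
  have hs0 : 0 ≤ s := by
    apply div_nonneg _ hBA.le
    linarith
  have ht0 : 0 ≤ t := by
    apply div_nonneg _ hBA.le
    linarith
  have hst : s + t = 1 := by
    rw [hsdef, htdef, ← add_div]
    field_simp
    ring
  have hαeq : α = s * A + t * B := by
    rw [hsdef, htdef]
    field_simp
    ring
  have hconv : Real.exp (α * Real.log q) ≤
      s * Real.exp (A * Real.log q) + t * Real.exp (B * Real.log q) := by
    have h := convexOn_exp.2 (Set.mem_univ (A * Real.log q)) (Set.mem_univ (B * Real.log q))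
      hs0 ht0 hst
    simp only [smul_eq_mul] at h
    rw [show α * Real.log q = s * (A * Real.log q) + t * (B * Real.log q) by
      rw [hαeq]; ring]
    exact h
  have hmain : q ^ (1 + α) < (q^2 - 2) * α := by
    rw [hrw]
    have h1 : q * Real.exp (α * Real.log q) ≤ s * (q ^ (1 + A)) + t * (q ^ (1 + B)) := by
      rw [hrw A, hrw B]
      nlinarith [hconv, hq0]
    have h2 : s * (q ^ (1 + A)) + t * (q ^ (1 + B)) < (q^2 - 2) * α := by
      have hend : s * (q ^ (1 + A)) + t * (q ^ (1 + B))
          < s * ((q^2 - 2) * A) + t * ((q^2 - 2) * B) := by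
        rcases eq_or_lt_of_le hs0 with h | h
        · have ht1 : t = 1 := by linarith
          rw [← h, ht1]
          simpa using key2
        · have ha : s * (q ^ (1 + A)) < s * ((q^2 - 2) * A) :=
            mul_lt_mul_of_pos_left key1 h
          have hb : t * (q ^ (1 + B)) ≤ t * ((q^2 - 2) * B) :=
            mul_le_mul_of_nonneg_left key2.le ht0
          linarith
      calc s * (q ^ (1 + A)) + t * (q ^ (1 + B))
          < s * ((q^2 - 2) * A) + t * ((q^2 - 2) * B) := hend
        _ = (q^2 - 2) * α := by rw [hαeq]; ring
    linarith
  rw [one_div_mul_eq_div, div_lt_iff₀ hα0]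
  exact hmain
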